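/- arXiv:2507.01647 — 5 statements merged into one kernel-verified Lean document; each statement's English description precedes it below -/
import Mathlib

section
/- For every s < 0, the Gaussian tail integral satisfies the two-sided bound ((1 + 5/(2s²))/(1 + 3/s² + 3/(4s⁴))) · e^{−s²}/(2|s|) ≤ I_0(s) ≤ ((1 + 9/(2s²) + 2/s⁴)/(1 + 5/s² + 15/(4s⁴))) · e^{−s²}/(2|s|). -/
open MeasureTheory Real Set Filter Topology

lemma expsq_int : Integrable (fun x : ℝ => Real.exp (-x^2)) := by
  simpa using integrable_exp_neg_mul_sq (one_pos)

lemma expsq_tendsto : Tendsto (fun x : ℝ => Real.exp (-x^2)) atTop (𝓝 0) := by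
  have h : Tendsto (fun x : ℝ => x^2) atTop atTop := tendsto_pow_atTop two_ne_zero
  exact (Real.tendsto_exp_neg_atTop_nhds_zero).comp h

lemma gauss_lower (t : ℝ) (ht : 0 < t) :
    (t^3 + 5/2*t)/(2*t^4+6*t^2+3/2) * Real.exp (-t^2) ≤ ∫ x in Set.Ioi t, Real.exp (-x^2) := by
  set D : ℝ → ℝ := fun x => 2*x^4+6*x^2+3/2 with hDdef
  have hD : ∀ x : ℝ, 0 < D x := fun x => by positivity
  set G : ℝ → ℝ := fun x => -((x^3+5/2*x)/(D x)) * Real.exp (-x^2) with hGdef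
  set G' : ℝ → ℝ := fun x => (1 - 6/(D x)^2) * Real.exp (-x^2) with hG'def
  have hE : ∀ x : ℝ, HasDerivAt (fun y : ℝ => Real.exp (-y^2)) (-2*x*Real.exp (-x^2)) x := by
    intro x
    have h := (Real.hasDerivAt_exp (-x^2)).comp x ((hasDerivAt_pow 2 x).neg)
    exact h.congr_deriv (by push_cast; ring)
  have hderiv : ∀ x : ℝ, HasDerivAt G (G' x) x := by
    intro x
    have hN : HasDerivAt (fun y : ℝ => y^3+5/2*y) (3*x^2+5/2) x := by
      have := (hasDerivAt_pow 3 x).add ((hasDerivAt_id x).const_mul (5/2 : ℝ))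
      exact this.congr_deriv (by push_cast; ring)
    have hDd : HasDerivAt D (8*x^3+12*x) x := by
      have := (((hasDerivAt_pow 4 x).const_mul (2:ℝ)).add ((hasDerivAt_pow 2 x).const_mul (6:ℝ))).add_const (3/2 : ℝ)
      exact this.congr_deriv (by push_cast; ring)
    have hQ := (hN.div hDd (hD x).ne')
    have hG := (hQ.neg).mul (hE x)
    refine hG.congr_deriv ?_
    have h2 : (D x) ≠ 0 := (hD x).ne'
    show _ = (1 - 6/(D x)^2) * Real.exp (-x^2)
    simp only [Pi.neg_apply, Pi.div_apply]
    field_simp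
    ring
  have hEint : IntegrableOn (fun x : ℝ => Real.exp (-x^2)) (Set.Ioi t) := expsq_int.integrableOn
  have hint : IntegrableOn G' (Set.Ioi t) := by
    apply Integrable.mono' ((expsq_int.const_mul 5).integrableOn)
    · exact (Continuous.aestronglyMeasurable (by
        apply Continuous.mul _ (by fun_prop)
        exact continuous_const.sub (continuous_const.div (by fun_prop) (fun x => pow_ne_zero 2 (hD x).ne')))).restrict
    · refine ae_of_all _ fun x => ?_
      have h1 : (0:ℝ) < Real.exp (-x^2) := Real.exp_pos _
      have h2 : (3/2 : ℝ) ≤ D x := by simp only [hDdef]; nlinarith [sq_nonneg x, sq_nonneg (x^2)]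
      have h3 : (0:ℝ) < 6/(D x)^2 := by positivity
      have h4 : 6/(D x)^2 ≤ 6/(3/2:ℝ)^2 := by
        apply div_le_div_of_nonneg_left (by norm_num) (by norm_num)
        nlinarith
      rw [Real.norm_eq_abs, abs_mul, abs_of_pos h1]
      have : |1 - 6/(D x)^2| ≤ 5 := by rw [abs_le]; constructor <;> nlinarith
      nlinarith
  have htend : Tendsto G atTop (𝓝 0) := by
    apply tendsto_of_tendsto_of_tendsto_of_le_of_le'
      (g := fun x : ℝ => -(2*Real.exp (-x^2))) (h := fun x : ℝ => 2*Real.exp (-x^2))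
    · simpa using (expsq_tendsto.const_mul 2).neg
    · simpa using expsq_tendsto.const_mul 2
    · filter_upwards [eventually_ge_atTop (1:ℝ)] with x hx
      have h1 : (0:ℝ) < Real.exp (-x^2) := Real.exp_pos _
      have hr : (x^3+5/2*x)/(D x) ≤ 2 := by
        rw [div_le_iff₀ (hD x)]
        simp only [hDdef]; nlinarith [sq_nonneg x, sq_nonneg (x-1)]
      have hr0 : 0 ≤ (x^3+5/2*x)/(D x) := by positivity
      simp only [hGdef]
      nlinarith
    · filter_upwards [eventually_ge_atTop (1:ℝ)] with x hx
      have h1 : (0:ℝ) < Real.exp (-x^2) := Real.exp_pos _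
      have hr0 : 0 ≤ (x^3+5/2*x)/(D x) := by positivity
      simp only [hGdef]
      nlinarith
  have key : ∫ x in Set.Ioi t, G' x = 0 - G t :=
    integral_Ioi_of_hasDerivAt_of_tendsto' (fun x _ => hderiv x) hint htend
  have hGt : 0 - G t = (t^3 + 5/2*t)/(2*t^4+6*t^2+3/2) * Real.exp (-t^2) := by
    simp only [hGdef, hDdef]; ring
  calc (t^3 + 5/2*t)/(2*t^4+6*t^2+3/2) * Real.exp (-t^2) = ∫ x in Set.Ioi t, G' x := by
        rw [key, hGt]
    _ ≤ ∫ x in Set.Ioi t, Real.exp (-x^2) := by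
        apply setIntegral_mono_on hint hEint measurableSet_Ioi
        intro x _
        have h1 : (0:ℝ) < Real.exp (-x^2) := Real.exp_pos _
        have h3 : (0:ℝ) < 6/(D x)^2 := by positivity
        show (1 - 6/(D x)^2) * Real.exp (-x^2) ≤ Real.exp (-x^2)
        nlinarith
lemma gauss_upper (t : ℝ) (ht : 0 < t) :
    (∫ x in Set.Ioi t, Real.exp (-x^2)) ≤
      (t^4 + 9/2*t^2 + 2)/(2*t^5+10*t^3+15/2*t) * Real.exp (-t^2) := by
  set D : ℝ → ℝ := fun x => 2*x^5+10*x^3+15/2*x with hDdef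
  have hD : ∀ x : ℝ, 0 < x → 0 < D x := fun x hx => by simp only [hDdef]; positivity
  set G : ℝ → ℝ := fun x => -((x^4+9/2*x^2+2)/(D x)) * Real.exp (-x^2) with hGdef
  set G' : ℝ → ℝ := fun x => (1 + 15/(D x)^2) * Real.exp (-x^2) with hG'def
  have hE : ∀ x : ℝ, HasDerivAt (fun y : ℝ => Real.exp (-y^2)) (-2*x*Real.exp (-x^2)) x := by
    intro x
    have h := (Real.hasDerivAt_exp (-x^2)).comp x ((hasDerivAt_pow 2 x).neg)
    exact h.congr_deriv (by push_cast; ring)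
  have hderiv : ∀ x : ℝ, 0 < x → HasDerivAt G (G' x) x := by
    intro x hx
    have hN : HasDerivAt (fun y : ℝ => y^4+9/2*y^2+2) (4*x^3+9*x) x := by
      have := (((hasDerivAt_pow 4 x).add ((hasDerivAt_pow 2 x).const_mul (9/2 : ℝ)))).add_const (2:ℝ)
      exact this.congr_deriv (by push_cast; ring)
    have hDd : HasDerivAt D (10*x^4+30*x^2+15/2) x := by
      have := (((hasDerivAt_pow 5 x).const_mul (2:ℝ)).add ((hasDerivAt_pow 3 x).const_mul (10:ℝ))).add ((hasDerivAt_id x).const_mul (15/2 : ℝ))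
      exact this.congr_deriv (by push_cast; ring)
    have hQ := (hN.div hDd (hD x hx).ne')
    have hG := (hQ.neg).mul (hE x)
    refine hG.congr_deriv ?_
    have h2 : (D x) ≠ 0 := (hD x hx).ne'
    show _ = (1 + 15/(D x)^2) * Real.exp (-x^2)
    simp only [Pi.neg_apply, Pi.div_apply]
    field_simp
    ring
  have hEint : IntegrableOn (fun x : ℝ => Real.exp (-x^2)) (Set.Ioi t) := expsq_int.integrableOn
  have hDt : ∀ x : ℝ, x ∈ Set.Ioi t → 15/2*t ≤ D x := by
    intro x hx
    have hx' : t < x := hx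
    simp only [hDdef]
    nlinarith [pow_pos (lt_trans ht hx') 5, pow_pos (lt_trans ht hx') 3]
  have hint : IntegrableOn G' (Set.Ioi t) := by
    apply Integrable.mono' ((expsq_int.const_mul (1 + 15/(15/2*t)^2)).integrableOn)
    · apply ContinuousOn.aestronglyMeasurable _ measurableSet_Ioi
      apply ContinuousOn.mul _ (Continuous.continuousOn (by fun_prop))
      apply ContinuousOn.add continuousOn_const
      apply ContinuousOn.div continuousOn_const (Continuous.continuousOn (by fun_prop))
      intro x hx
      exact pow_ne_zero 2 (hD x (lt_trans ht hx)).ne'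
    · rw [ae_restrict_iff' measurableSet_Ioi]
      refine ae_of_all _ fun x hx => ?_
      have h1 : (0:ℝ) < Real.exp (-x^2) := Real.exp_pos _
      have h2 := hDt x hx
      have ht2 : (0:ℝ) < 15/2*t := by positivity
      have h4 : 15/(D x)^2 ≤ 15/(15/2*t)^2 := by
        apply div_le_div_of_nonneg_left (by norm_num) (by positivity)
        nlinarith
      have hDx : (0:ℝ) < D x := hD x (lt_trans ht hx)
      have h5 : (0:ℝ) < 15/(D x)^2 := div_pos (by norm_num) (pow_pos hDx 2)
      rw [Real.norm_eq_abs, abs_mul, abs_of_pos h1, abs_of_pos (by positivity : (0:ℝ) < 1 + 15/(D x)^2)]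
      nlinarith
  have htend : Tendsto G atTop (𝓝 0) := by
    apply tendsto_of_tendsto_of_tendsto_of_le_of_le'
      (g := fun x : ℝ => -(4*Real.exp (-x^2))) (h := fun x : ℝ => 4*Real.exp (-x^2))
    · simpa using (expsq_tendsto.const_mul 4).neg
    · simpa using expsq_tendsto.const_mul 4
    · filter_upwards [eventually_ge_atTop (1:ℝ)] with x hx
      have h1 : (0:ℝ) < Real.exp (-x^2) := Real.exp_pos _
      have hx0 : (0:ℝ) < x := by linarith
      have hr : (x^4+9/2*x^2+2)/(D x) ≤ 4 := by
        rw [div_le_iff₀ (hD x hx0)]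
        simp only [hDdef]; nlinarith [sq_nonneg x, pow_pos hx0 5, pow_pos hx0 3]
      have hr0 : 0 ≤ (x^4+9/2*x^2+2)/(D x) := by
        apply div_nonneg (by positivity) (hD x hx0).le
      simp only [hGdef]
      nlinarith
    · filter_upwards [eventually_ge_atTop (1:ℝ)] with x hx
      have h1 : (0:ℝ) < Real.exp (-x^2) := Real.exp_pos _
      have hx0 : (0:ℝ) < x := by linarith
      have hr0 : 0 ≤ (x^4+9/2*x^2+2)/(D x) := by
        apply div_nonneg (by positivity) (hD x hx0).le
      simp only [hGdef]
      nlinarith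
  have key : ∫ x in Set.Ioi t, G' x = 0 - G t :=
    integral_Ioi_of_hasDerivAt_of_tendsto' (fun x hx => hderiv x (lt_of_lt_of_le ht hx)) hint htend
  have hGt : 0 - G t = (t^4 + 9/2*t^2 + 2)/(2*t^5+10*t^3+15/2*t) * Real.exp (-t^2) := by
    simp only [hGdef, hDdef]; ring
  calc (∫ x in Set.Ioi t, Real.exp (-x^2)) ≤ ∫ x in Set.Ioi t, G' x := by
        apply setIntegral_mono_on hEint hint measurableSet_Ioi
        intro x hx
        have h1 : (0:ℝ) < Real.exp (-x^2) := Real.exp_pos _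
        have h3 : (0:ℝ) < 15/(D x)^2 := by
          have := hD x (lt_trans ht hx); positivity
        show Real.exp (-x^2) ≤ (1 + 15/(D x)^2) * Real.exp (-x^2)
        nlinarith
    _ = (t^4 + 9/2*t^2 + 2)/(2*t^5+10*t^3+15/2*t) * Real.exp (-t^2) := by rw [key, hGt]

noncomputable def In (n : ℕ) (s : ℝ) : ℝ :=
  ∫ z in Set.Ioi (0 : ℝ), z ^ n * Real.exp (-(z - s) ^ 2)

theorem In_zero_tail_bounds (s : ℝ) (hs : s < 0) :
    (1 + 5 / (2 * s ^ 2)) / (1 + 3 / s ^ 2 + 3 / (4 * s ^ 4))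
        * (Real.exp (-s ^ 2) / (2 * |s|)) ≤ In 0 s ∧
    In 0 s ≤ (1 + 9 / (2 * s ^ 2) + 2 / s ^ 4) / (1 + 5 / s ^ 2 + 15 / (4 * s ^ 4))
        * (Real.exp (-s ^ 2) / (2 * |s|)) := by
  have ht : 0 < -s := by linarith
  have hs0 : s ≠ 0 := ne_of_lt hs
  have hIn : In 0 s = ∫ x in Set.Ioi (-s), Real.exp (-x^2) := by
    simp only [In, pow_zero, one_mul]
    have h := (measurePreserving_sub_right volume s).setIntegral_preimage_emb
        (MeasurableEquiv.subRight s).measurableEmbedding (fun z => Real.exp (-z^2)) (Set.Ioi (-s))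
    have hpre : (fun x => x - s) ⁻¹' (Set.Ioi (-s)) = Set.Ioi (0:ℝ) := by
      ext x; simp only [Set.mem_preimage, Set.mem_Ioi]; constructor <;> intro <;> linarith
    rw [← h, hpre]
  have habs : |s| = -s := abs_of_neg hs
  constructor
  · have hl := gauss_lower (-s) ht
    rw [hIn, habs]
    refine le_trans (le_of_eq ?_) hl
    rw [show ((-s)^2 : ℝ) = s^2 by ring]
    have d1 : (1 + 3/s^2 + 3/(4*s^4) : ℝ) ≠ 0 := by positivity
    have d2 : (2*(-s)^4+6*(-s)^2+3/2 : ℝ) ≠ 0 := by positivity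
    field_simp
    ring
  · have hu := gauss_upper (-s) ht
    rw [hIn, habs]
    refine le_trans hu (le_of_eq ?_)
    rw [show ((-s)^2 : ℝ) = s^2 by ring]
    have d1 : (1 + 5/s^2 + 15/(4*s^4) : ℝ) ≠ 0 := by positivity
    have d2 : (2*(-s)^5+10*(-s)^3+15/2*(-s) : ℝ) ≠ 0 := by positivity
    have d3 : (4*s^5+20*s^3+15*s : ℝ) ≠ 0 := by
      have h5 : (0:ℝ) < (-s)^5 := pow_pos ht 5
      have h3 : (0:ℝ) < (-s)^3 := pow_pos ht 3
      have : (4*s^5+20*s^3+15*s : ℝ) < 0 := by nlinarith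
      exact ne_of_lt this
    field_simp
    have d4 : (s ^ 2 * 2 * (-(s ^ 2 * 2) + -10) + -15 : ℝ) ≠ 0 := by
      have : (s ^ 2 * 2 * (-(s ^ 2 * 2) + -10) + -15 : ℝ) < 0 := by nlinarith [sq_nonneg s, sq_nonneg (s^2)]
      exact ne_of_lt this
    rw [div_eq_iff d4]
    ring
end

section
/- As s → +∞, I_0(s) → √π, I_1(s)/s → √π, I_2(s)/s² → √π, and I_3(s)/s³ → √π. -/
open MeasureTheory Real Filter

lemma In_shift (n : ℕ) (s : ℝ) :
    In n s = ∫ u, Set.indicator (Set.Ioi (-s))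
      (fun u => (u + s) ^ n * Real.exp (-u ^ 2)) u := by
  have h := MeasureTheory.integral_add_right_eq_self (μ := volume)
    (Set.indicator (Set.Ioi (0 : ℝ)) (fun z => z ^ n * Real.exp (-(z - s) ^ 2))) s
  rw [In, ← MeasureTheory.integral_indicator measurableSet_Ioi, ← h]
  congr 1; funext x
  by_cases hx : x ∈ Set.Ioi (-s)
  · have hx' : x + s ∈ Set.Ioi (0 : ℝ) := by
      simp only [Set.mem_Ioi] at hx ⊢; linarith
    rw [Set.indicator_of_mem hx', Set.indicator_of_mem hx, add_sub_cancel_right]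
  · have hx' : x + s ∉ Set.Ioi (0 : ℝ) := by
      simp only [Set.mem_Ioi] at hx ⊢; linarith
    rw [Set.indicator_of_notMem hx', Set.indicator_of_notMem hx]

lemma integrable_abs_pow_exp (n : ℕ) :
    Integrable (fun u : ℝ => |u| ^ n * Real.exp (-u ^ 2)) := by
  have h := integrable_rpow_mul_exp_neg_mul_sq (b := 1) one_pos (s := (n : ℝ))
    (lt_of_lt_of_le neg_one_lt_zero (Nat.cast_nonneg n))
  have h2 : Integrable (fun u : ℝ => u ^ n * Real.exp (-u ^ 2)) := by
    have := h
    simp only [neg_mul, one_mul, Real.rpow_natCast] at this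
    exact this
  have := h2.abs
  refine this.congr ?_
  filter_upwards with u
  rw [abs_mul, abs_pow, abs_of_pos (Real.exp_pos _)]

lemma In_div_tendsto (n : ℕ) :
    Tendsto (fun s => In n s / s ^ n) atTop (nhds (Real.sqrt π)) := by
  have hπ : Real.sqrt π = ∫ u : ℝ, Real.exp (-u ^ 2) := by
    have := integral_gaussian 1
    simp only [neg_mul, one_mul, div_one] at this
    exact this.symm
  rw [hπ]
  have key : Tendsto (fun s : ℝ => ∫ u, Set.indicator (Set.Ioi (-s))
      (fun u => (1 + u / s) ^ n * Real.exp (-u ^ 2)) u) atTop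
      (nhds (∫ u : ℝ, Real.exp (-u ^ 2))) := by
    apply tendsto_integral_filter_of_dominated_convergence
      (bound := fun u => 2 ^ n * ((1 + |u| ^ n) * Real.exp (-u ^ 2)))
    · filter_upwards with s
      exact (Continuous.aestronglyMeasurable (by continuity)).indicator measurableSet_Ioi
    · filter_upwards [eventually_ge_atTop (1 : ℝ)] with s hs
      filter_upwards with u
      by_cases hu : u ∈ Set.Ioi (-s)
      · rw [Set.indicator_of_mem hu]
        have hs0 : (0 : ℝ) < s := lt_of_lt_of_le one_pos hs
        have hmem : -s < u := hu
        have h0 : (0 : ℝ) ≤ 1 + u / s := by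
          have hd : -1 ≤ u / s := by
            rw [le_div_iff₀ hs0]; nlinarith
          linarith
        have h1 : 1 + u / s ≤ 1 + |u| := by
          have : u / s ≤ |u| := by
            rcases le_or_gt 0 u with h | h
            · rw [abs_of_nonneg h, div_le_iff₀ hs0]; nlinarith
            · have : u / s < 0 := div_neg_of_neg_of_pos h hs0
              linarith [abs_nonneg u]
          linarith
        have h2 : (1 + u / s) ^ n ≤ 2 ^ n * (1 + |u| ^ n) := by
          calc (1 + u / s) ^ n ≤ (1 + |u|) ^ n := by
                exact pow_le_pow_left₀ h0 h1 n
            _ ≤ 2 ^ (n - 1) * (1 ^ n + |u| ^ n) :=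
                add_pow_le zero_le_one (abs_nonneg u) n
            _ ≤ 2 ^ n * (1 + |u| ^ n) := by
                rw [one_pow]
                gcongr <;> simp
        rw [norm_mul, norm_pow, Real.norm_eq_abs, Real.norm_eq_abs,
          abs_of_nonneg h0, abs_of_pos (Real.exp_pos _), ← mul_assoc]
        exact mul_le_mul_of_nonneg_right h2 (Real.exp_pos _).le
      · rw [Set.indicator_of_notMem hu]
        simp only [norm_zero]
        positivity
    · have h1 : Integrable (fun u : ℝ => Real.exp (-u ^ 2)) := by
        simpa using integrable_exp_neg_mul_sq one_pos
      have h2 : Integrable (fun u : ℝ => (1 + |u| ^ n) * Real.exp (-u ^ 2)) := by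
        refine (h1.add (integrable_abs_pow_exp n)).congr ?_
        filter_upwards with u; simp only [Pi.add_apply]; ring
      exact h2.const_mul _
    · filter_upwards with u
      have h1 : ∀ᶠ s : ℝ in atTop, Set.indicator (Set.Ioi (-s))
          (fun u => (1 + u / s) ^ n * Real.exp (-u ^ 2)) u
          = (1 + u / s) ^ n * Real.exp (-u ^ 2) := by
        filter_upwards [eventually_gt_atTop (-u)] with s hss
        exact Set.indicator_of_mem (by simpa [Set.mem_Ioi] using neg_lt_of_neg_lt hss) _
      rw [show Real.exp (-u ^ 2) = (1 + 0) ^ n * Real.exp (-u ^ 2) by simp]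
      refine Tendsto.congr' (Filter.EventuallyEq.symm h1) ?_
      refine Tendsto.mul_const _ (Tendsto.pow ?_ n)
      exact tendsto_const_nhds.add (Tendsto.div_atTop tendsto_const_nhds tendsto_id)
  refine Tendsto.congr' ?_ key
  filter_upwards [eventually_gt_atTop (0 : ℝ)] with s hs
  rw [In_shift n s, eq_div_iff (by positivity), ← integral_mul_const]
  congr 1; funext u
  by_cases hu : u ∈ Set.Ioi (-s)
  · rw [Set.indicator_of_mem hu, Set.indicator_of_mem hu]
    have hs0 : s ≠ 0 := ne_of_gt hs
    field_simp
    rw [← mul_pow, div_mul_cancel₀ _ hs0, add_comm]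
  · rw [Set.indicator_of_notMem hu, Set.indicator_of_notMem hu, zero_mul]

theorem In_limits_atTop :
    Tendsto (fun s => In 0 s) atTop (nhds (Real.sqrt π)) ∧
    Tendsto (fun s => In 1 s / s) atTop (nhds (Real.sqrt π)) ∧
    Tendsto (fun s => In 2 s / s ^ 2) atTop (nhds (Real.sqrt π)) ∧
    Tendsto (fun s => In 3 s / s ^ 3) atTop (nhds (Real.sqrt π)) := by
  refine ⟨?_, ?_, In_div_tendsto 2, In_div_tendsto 3⟩
  · simpa using In_div_tendsto 0
  · simpa using In_div_tendsto 1
end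

section
/- For δ > 0, define Φ(s) = I_1(s)·(I_3(s) + I_1(s)·(1 + δ/2)) / I_2(s)². Then Φ(s)/s² → 1 + δ/2 as s → −∞; in particular Φ(s) → +∞ as s → −∞. -/
open MeasureTheory Real Filter
open scoped Nat

noncomputable def Phi (δ : ℝ) (s : ℝ) : ℝ :=
  In 1 s * (In 3 s + In 1 s * (1 + δ / 2)) / (In 2 s) ^ 2

noncomputable def Gf (n : ℕ) (u : ℝ) : ℝ :=
  ∫ w in Set.Ioi (0 : ℝ), w ^ n * Real.exp (-w) * Real.exp (-(w / u) ^ 2)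

lemma integrable_base (n : ℕ) :
    IntegrableOn (fun w : ℝ => w ^ n * Real.exp (-w)) (Set.Ioi 0) := by
  have h := Real.GammaIntegral_convergent (s := (n : ℝ) + 1) (by positivity)
  refine h.congr_fun (fun x hx => ?_) measurableSet_Ioi
  rw [add_sub_cancel_right]; beta_reduce; rw [Real.rpow_natCast, mul_comm]

lemma integral_pow_exp (n : ℕ) :
    ∫ w in Set.Ioi (0 : ℝ), w ^ n * Real.exp (-w) = (n ! : ℝ) := by
  rw [← Real.Gamma_nat_eq_factorial n, Real.Gamma_eq_integral (by positivity)]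
  refine setIntegral_congr_fun measurableSet_Ioi fun x hx => ?_
  rw [add_sub_cancel_right, Real.rpow_natCast, mul_comm]

lemma Gf_tendsto (n : ℕ) : Tendsto (Gf n) atTop (nhds ((n ! : ℝ))) := by
  have key : Tendsto (Gf n) atTop
      (nhds (∫ w in Set.Ioi (0 : ℝ), w ^ n * Real.exp (-w))) := by
    apply tendsto_integral_filter_of_dominated_convergence
      (fun w => w ^ n * Real.exp (-w))
    · filter_upwards with u
      exact (Continuous.aestronglyMeasurable (by fun_prop)).restrict
    · filter_upwards with u
      filter_upwards [ae_restrict_mem measurableSet_Ioi] with w hw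
      have hw0 : (0:ℝ) < w := hw
      rw [Real.norm_eq_abs, abs_of_nonneg (by positivity)]
      exact mul_le_of_le_one_right (by positivity)
        (Real.exp_le_one_iff.mpr (neg_nonpos.mpr (sq_nonneg _)))
    · exact integrable_base n
    · filter_upwards [ae_restrict_mem measurableSet_Ioi] with w hw
      have h0 : Tendsto (fun u : ℝ => -(w / u) ^ 2) atTop (nhds 0) := by
        have h1 : Tendsto (fun u : ℝ => w / u) atTop (nhds 0) :=
          tendsto_const_nhds.div_atTop tendsto_id
        simpa using (h1.pow 2).neg
      have h2 : Tendsto (fun u : ℝ => Real.exp (-(w / u) ^ 2)) atTop (nhds 1) := by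
        simpa [Function.comp_def] using (Real.continuous_exp.tendsto 0).comp h0
      simpa using h2.const_mul (w ^ n * Real.exp (-w))
  rwa [integral_pow_exp] at key

lemma In_eq (n : ℕ) {s : ℝ} (hs : s < 0) :
    In n s = Real.exp (-s ^ 2) * ((-2 * s)⁻¹) ^ (n + 1) * Gf n (-2 * s) := by
  have hu : 0 < -2 * s := by linarith
  set u := -2 * s with hu_def
  have step1 : In n s
      = Real.exp (-s ^ 2) * ∫ z in Set.Ioi (0 : ℝ), z ^ n * Real.exp (-(u * z) - z ^ 2) := by
    rw [In, ← MeasureTheory.integral_const_mul]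
    refine setIntegral_congr_fun measurableSet_Ioi fun z hz => ?_
    have h : -(z - s) ^ 2 = -s ^ 2 + (-(u * z) - z ^ 2) := by rw [hu_def]; ring
    rw [h, Real.exp_add]; ring
  have h := integral_comp_mul_left_Ioi
    (fun w => w ^ n * Real.exp (-w) * Real.exp (-(w / u) ^ 2)) 0 hu
  simp only [mul_zero] at h
  have h2 : ∀ z ∈ Set.Ioi (0:ℝ),
      (u * z) ^ n * Real.exp (-(u * z)) * Real.exp (-((u * z) / u) ^ 2)
        = u ^ n * (z ^ n * Real.exp (-(u * z) - z ^ 2)) := by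
    intro z hz
    have he : Real.exp (-(u * z) - z ^ 2) = Real.exp (-(u * z)) * Real.exp (-(z ^ 2)) := by
      rw [← Real.exp_add]; ring_nf
    rw [he, mul_div_cancel_left₀ _ hu.ne', mul_pow]
    ring
  rw [setIntegral_congr_fun measurableSet_Ioi h2, MeasureTheory.integral_const_mul, smul_eq_mul] at h
  have hun : (u : ℝ) ^ n ≠ 0 := pow_ne_zero _ hu.ne'
  have hI : (∫ z in Set.Ioi (0 : ℝ), z ^ n * Real.exp (-(u * z) - z ^ 2))
      = u⁻¹ ^ (n + 1) * Gf n u := by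
    apply mul_left_cancel₀ hun
    rw [h, pow_succ, inv_pow]
    have hGf : (∫ x in Set.Ioi (0:ℝ), x ^ n * Real.exp (-x) * Real.exp (-(x / u) ^ 2)) = Gf n u := rfl
    rw [hGf]
    field_simp
  rw [step1, hI]; ring

theorem Phi_limit_atBot (δ : ℝ) (hδ : 0 < δ) :
    Tendsto (fun s => Phi δ s / s ^ 2) atBot (nhds (1 + δ / 2)) ∧
    Tendsto (fun s => Phi δ s) atBot atTop := by
  have hneg2 : Tendsto (fun s : ℝ => -2 * s) atBot atTop := by
    have heq : (fun s : ℝ => -2 * s) = (fun x : ℝ => 2 * x) ∘ Neg.neg := by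
      funext x; simp only [Function.comp_apply]; ring
    rw [heq]
    exact (tendsto_id.const_mul_atTop two_pos).comp tendsto_neg_atBot_atTop
  have hs2 : Tendsto (fun s : ℝ => s ^ 2) atBot atTop := by
    have heq : (fun s : ℝ => s ^ 2) = (fun x : ℝ => x ^ 2) ∘ Neg.neg := by
      funext x; simp only [Function.comp_apply]; ring
    rw [heq]
    exact (tendsto_pow_atTop two_ne_zero).comp tendsto_neg_atBot_atTop
  have hF : ∀ n : ℕ, Tendsto (fun s : ℝ => Gf n (-2 * s)) atBot (nhds ((n ! : ℝ))) :=
    fun n => (Gf_tendsto n).comp hneg2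
  have hF1 := hF 1
  have hF2 := hF 2
  have hF3 := hF 3
  -- the model function
  have T1 : Tendsto (fun s : ℝ => Gf 1 (-2*s) * Gf 3 (-2*s) / (Gf 2 (-2*s)) ^ 2)
      atBot (nhds (((1:ℕ)! : ℝ) * ((3:ℕ)! : ℝ) / (((2:ℕ)! : ℝ)) ^ 2)) :=
    (hF1.mul hF3).div (hF2.pow 2) (by norm_num [Nat.factorial])
  have T1' := T1.mul (tendsto_inv_atTop_zero.comp hs2)
  have T2 : Tendsto (fun s : ℝ => (1 + δ/2) * 4 * (Gf 1 (-2*s)) ^ 2 / (Gf 2 (-2*s)) ^ 2)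
      atBot (nhds ((1 + δ/2) * 4 * (((1:ℕ)! : ℝ)) ^ 2 / (((2:ℕ)! : ℝ)) ^ 2)) :=
    (tendsto_const_nhds.mul (hF1.pow 2)).div (hF2.pow 2) (by norm_num [Nat.factorial])
  have T := T1'.add T2
  have hval : ((1:ℕ)! : ℝ) * ((3:ℕ)! : ℝ) / (((2:ℕ)! : ℝ)) ^ 2 * 0
      + (1 + δ/2) * 4 * (((1:ℕ)! : ℝ)) ^ 2 / (((2:ℕ)! : ℝ)) ^ 2 = 1 + δ/2 := by
    norm_num [Nat.factorial]
  rw [hval] at T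
  have heq : ∀ᶠ s : ℝ in atBot, Phi δ s / s ^ 2
      = Gf 1 (-2*s) * Gf 3 (-2*s) / (Gf 2 (-2*s)) ^ 2 * ((fun s : ℝ => s ^ 2) s)⁻¹
        + (1 + δ/2) * 4 * (Gf 1 (-2*s)) ^ 2 / (Gf 2 (-2*s)) ^ 2 := by
    filter_upwards [eventually_lt_atBot (0:ℝ),
      hF2.eventually (eventually_gt_nhds (by norm_num [Nat.factorial] : (0:ℝ) < ((2:ℕ)! : ℝ)))]
      with s hs hG2
    have hs0 : s ≠ 0 := hs.ne
    have hupos : (0:ℝ) < -2 * s := by linarith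
    have hu0 : (-2 * s : ℝ) ≠ 0 := hupos.ne'
    have hG2' : Gf 2 (-2*s) ≠ 0 := hG2.ne'
    have hPhi : Phi δ s = (Gf 1 (-2*s) * Gf 3 (-2*s)
        + (1 + δ/2) * (-2*s) ^ 2 * (Gf 1 (-2*s)) ^ 2) / (Gf 2 (-2*s)) ^ 2 := by
      rw [Phi, In_eq 1 hs, In_eq 2 hs, In_eq 3 hs]
      have hB : (Real.exp (-s ^ 2) * ((-2*s)⁻¹) ^ (2+1) * Gf 2 (-2*s)) ^ 2 ≠ 0 :=
        pow_ne_zero _ (mul_ne_zero (mul_ne_zero (Real.exp_ne_zero _)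
          (pow_ne_zero _ (inv_ne_zero hu0))) hG2')
      rw [div_eq_div_iff hB (pow_ne_zero 2 hG2')]
      field_simp
      have hs6 : s ^ 2 * s⁻¹ ^ 6 = s⁻¹ ^ 4 := by field_simp
      linear_combination (-(Gf 1 (-(s*2)) ^ 2 * Gf 2 (-(s*2)) ^ 2 * (δ/16 + 1/8))) * hs6
    have hu2 : ((-2*s) : ℝ) ^ 2 = 4 * s ^ 2 := by ring
    have hs2' : (s:ℝ) ^ 2 ≠ 0 := pow_ne_zero _ hs0
    set G1 := Gf 1 (-2*s) with hG1d
    set Gt := Gf 2 (-2*s) with hGtd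
    set G3 := Gf 3 (-2*s) with hG3d
    rw [hPhi, hu2]
    simp only [← div_eq_mul_inv]
    field_simp
  have first : Tendsto (fun s => Phi δ s / s ^ 2) atBot (nhds (1 + δ / 2)) :=
    Tendsto.congr' (EventuallyEq.symm heq) T
  refine ⟨first, ?_⟩
  have h2 : Tendsto (fun s : ℝ => Phi δ s / s ^ 2 * s ^ 2) atBot atTop :=
    Tendsto.pos_mul_atTop (by linarith) first hs2
  refine Tendsto.congr' ?_ h2
  filter_upwards [eventually_lt_atBot (0:ℝ)] with s hs
  have h0 : s ^ 2 ≠ 0 := pow_ne_zero _ hs.ne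
  rw [div_mul_cancel₀ _ h0]
end

section
/- Let γ = (5+δ)/(3+δ) with δ > 0, and let p₀, p_∞, T₀, T_∞ > 0, n₀ = p₀/(k_B T₀), n_∞ = p_∞/(k_B T_∞), u ∈ ℝ, and Mach number M_∞ = u·√(m/(γ k_B T_∞)). If n_∞(u² + k_B T_∞/m) − p₀/(2m) ≥ 0, then p_∞/p₀ ≥ 1/(2(1 + γ M_∞²)). -/
theorem overall_necessary_condition
    (δ m kB p₀ pinf T₀ Tinf : ℝ) (u : ℝ)
    (hδ : 0 < δ) (hm : 0 < m) (hkB : 0 < kB)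
    (hp₀ : 0 < p₀) (hpinf : 0 < pinf) (hT₀ : 0 < T₀) (hTinf : 0 < Tinf)
    (γ : ℝ) (hγ : γ = (5 + δ) / (3 + δ))
    (n₀ ninf : ℝ) (hn₀ : n₀ = p₀ / (kB * T₀)) (hninf : ninf = pinf / (kB * Tinf))
    (Minf : ℝ) (hM : Minf = u * Real.sqrt (m / (γ * kB * Tinf)))
    (hmom : 0 ≤ ninf * (u ^ 2 + kB * Tinf / m) - p₀ / (2 * m)) :
    pinf / p₀ ≥ 1 / (2 * (1 + γ * Minf ^ 2)) := by
  have hγpos : 0 < γ := by rw [hγ]; positivity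
  have hs : Minf ^ 2 = u ^ 2 * (m / (γ * kB * Tinf)) := by
    rw [hM, mul_pow, Real.sq_sqrt (by positivity)]
  have hγM : γ * Minf ^ 2 = u ^ 2 * m / (kB * Tinf) := by
    rw [hs]; field_simp
  have h2 : (0:ℝ) < kB * Tinf := by positivity
  have e1 : pinf / (kB * Tinf) * (kB * Tinf) = pinf := div_mul_cancel₀ _ (ne_of_gt h2)
  have e2 : p₀ / (2 * m) * (2 * m) = p₀ := div_mul_cancel₀ _ (by positivity)
  have e3 : kB * Tinf / m * m = kB * Tinf := div_mul_cancel₀ _ (ne_of_gt hm)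
  have key : p₀ * (kB * Tinf) ≤ 2 * pinf * (m * u ^ 2 + kB * Tinf) := by
    rw [hninf, sub_nonneg, div_le_iff₀ (by positivity), div_mul_eq_mul_div,
      div_mul_eq_mul_div, le_div_iff₀ h2] at hmom
    nlinarith [hmom, e3]
  rw [ge_iff_le, hγM, div_le_div_iff₀ (by positivity) hp₀,
    ← mul_le_mul_iff_of_pos_right h2]
  have e4 : u ^ 2 * m / (kB * Tinf) * (kB * Tinf) = u ^ 2 * m := div_mul_cancel₀ _ (ne_of_gt h2)
  nlinarith [key, e4]
end

section
/- Let δ > 0 and u > 0, and suppose log(p₀/p_∞) + ((5+δ)/2)·log(T_∞/T₀) + ((5+δ)/2)·(1 − (1 + M_∞²/(3+δ))·(T_∞/T₀)) ≥ 0, where p₀, p_∞, T₀, T_∞ > 0 and M_∞ ∈ ℝ. Then p_∞/p₀ ≤ (1 + M_∞²/(3+δ))^{−(5+δ)/2}. -/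
theorem evaporation_third_condition
    (δ p₀ pinf T₀ Tinf Minf : ℝ) (u : ℝ)
    (hδ : 0 < δ) (hu : 0 < u)
    (hp₀ : 0 < p₀) (hpinf : 0 < pinf) (hT₀ : 0 < T₀) (hTinf : 0 < Tinf)
    (hineq : 0 ≤ Real.log (p₀ / pinf) + (5 + δ) / 2 * Real.log (Tinf / T₀)
      + (5 + δ) / 2 * (1 - (1 + Minf ^ 2 / (3 + δ)) * (Tinf / T₀))) :
    pinf / p₀ ≤ (1 + Minf ^ 2 / (3 + δ)) ^ (-(5 + δ) / 2) := by
  set c : ℝ := 1 + Minf ^ 2 / (3 + δ) with hc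
  set a : ℝ := (5 + δ) / 2 with ha
  have h3δ : (0:ℝ) < 3 + δ := by linarith
  have hc1 : (1:ℝ) ≤ c := by
    have h := div_nonneg (sq_nonneg Minf) h3δ.le
    rw [hc]; linarith
  have hc0 : (0:ℝ) < c := by linarith
  have ht : (0:ℝ) < Tinf / T₀ := div_pos hTinf hT₀
  have ha0 : (0:ℝ) < a := by rw [ha]; linarith
  have hct : (0:ℝ) < c * (Tinf / T₀) := mul_pos hc0 ht
  have key : Real.log (Tinf / T₀) + (1 - c * (Tinf / T₀)) ≤ -Real.log c := by
    have h1 : Real.log (c * (Tinf / T₀)) ≤ c * (Tinf / T₀) - 1 :=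
      Real.log_le_sub_one_of_pos hct
    have h2 : Real.log (c * (Tinf / T₀)) = Real.log c + Real.log (Tinf / T₀) :=
      Real.log_mul hc0.ne' ht.ne'
    linarith
  have hlog : a * Real.log c ≤ Real.log (p₀ / pinf) := by
    nlinarith [mul_le_mul_of_nonneg_left key ha0.le]
  have hpow : c ^ a ≤ p₀ / pinf := by
    have : Real.log (c ^ a) ≤ Real.log (p₀ / pinf) := by
      rw [Real.log_rpow hc0]; exact hlog
    exact (Real.log_le_log_iff (Real.rpow_pos_of_pos hc0 a) (div_pos hp₀ hpinf)).mp this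
  have hfin : pinf / p₀ ≤ (c ^ a)⁻¹ := by
    rw [show pinf / p₀ = (p₀ / pinf)⁻¹ by field_simp]
    exact inv_anti₀ (Real.rpow_pos_of_pos hc0 a) hpow
  calc pinf / p₀ ≤ (c ^ a)⁻¹ := hfin
    _ = c ^ (-a) := (Real.rpow_neg hc0.le a).symm
    _ = c ^ (-(5 + δ) / 2) := by rw [ha]; ring_nf
end
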